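/- arXiv:1803.10029 — 3 statements merged into one kernel-verified Lean document; each statement's English description precedes it below -/
import Mathlib

section
/- Let f, φ : ℝⁿ → ℝ be measurable with φ(x) ≥ 0, f(0) = 0, and |f(x)| < 1 on a neighborhood U containing the support of φ. Let ρ ≤ 0 be such that Z(s) = ∫_{ℝⁿ} |f(x)|^s·φ(x) dx converges (the integrand is integrable) for all real s > ρ. If there is a holomorphic function Z̃ on an open set containing {Re(s) > ρ} ∪ V, where V is an open neighborhood of ρ, agreeing with Z on {Re(s) > ρ}, then there exists δ > 0 such that the integral ∫_{ℝⁿ} |f(x)|^{ρ-δ}·φ(x) dx converges. -/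
open Real Filter Set Topology MeasureTheory Complex

/-- elementary bound: `t^ε * |log t|^(k+1) ≤ ((k+1)/ε)^(k+1)` for `0 < t ≤ 1`. -/
lemma aux_log_bound (ε : ℝ) (hε : 0 < ε) (k : ℕ) {t : ℝ} (ht : 0 < t) (ht1 : t ≤ 1) :
    t ^ ε * |Real.log t| ^ (k + 1) ≤ ((k + 1) / ε) ^ (k + 1) := by
  set m : ℝ := ((k:ℝ) + 1)
  have hm : (0:ℝ) < m := by positivity
  set β : ℝ := ε / m
  have hβ : 0 < β := by positivity
  have hlog : |Real.log t| ≤ t ^ (-β) / β := by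
    rw [abs_of_nonpos (Real.log_nonpos ht.le ht1)]
    have h1 : Real.log (t ^ (-β)) ≤ t ^ (-β) - 1 :=
      Real.log_le_sub_one_of_pos (Real.rpow_pos_of_pos ht _)
    rw [Real.log_rpow ht] at h1
    have : -β * Real.log t ≤ t ^ (-β) := by linarith
    calc -Real.log t = (-β * Real.log t) / β := by field_simp
    _ ≤ t ^ (-β) / β := div_le_div_of_nonneg_right this hβ.le
  have hpow : |Real.log t| ^ (k+1) ≤ (t ^ (-β) / β) ^ (k+1) :=
    pow_le_pow_left₀ (abs_nonneg _) hlog _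
  have key : t ^ ε * (t ^ (-β) / β) ^ (k+1) = (1/β) ^ (k+1) := by
    rw [div_pow, ← Real.rpow_natCast (t ^ (-β)) (k+1), ← Real.rpow_mul ht.le]
    have : -β * ((k:ℝ) + 1) = -ε := by
      simp only [β, m]; field_simp
    push_cast [this]
    have h2 : t ^ ε * t ^ (-ε) = 1 := by
      rw [← Real.rpow_add ht]; simp
    rw [← mul_div_assoc, h2, one_div_pow, one_div]
  have : t ^ ε * |Real.log t| ^ (k+1) ≤ (1/β) ^ (k+1) := by
    rw [← key]
    exact mul_le_mul_of_nonneg_left hpow (Real.rpow_nonneg ht.le _)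
  refine this.trans (le_of_eq ?_)
  congr 1
  simp only [β, m]; field_simp

lemma aux_integrable {α : Type*} [MeasurableSpace α] {μ : Measure α}
    {g φ : α → ℝ} (hg : Measurable g) (hφ : Measurable φ)
    (hg0 : ∀ x, 0 ≤ g x) (hφ0 : ∀ x, 0 ≤ φ x)
    (h1 : ∀ x, φ x ≠ 0 → g x < 1)
    {ρ : ℝ} (base : ∀ s : ℝ, ρ < s → Integrable (fun x => g x ^ s * φ x) μ)
    (k : ℕ) (s : ℝ) (hs : ρ < s) :
    Integrable (fun x => g x ^ s * |Real.log (g x)| ^ k * φ x) μ := by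
  have hmeas : AEStronglyMeasurable (fun x => g x ^ s * |Real.log (g x)| ^ k * φ x) μ :=
    (((hg.pow_const s).mul (((Real.measurable_log.comp hg).abs).pow_const k)).mul
      hφ).aestronglyMeasurable
  cases k with
  | zero => simpa using base s hs
  | succ k =>
    set s' := (ρ + s)/2 with hs'def
    have hs' : ρ < s' := by simp only [hs'def]; linarith
    have hεpos : 0 < s - s' := by simp only [hs'def]; linarith
    set C := (((k:ℝ)+1)/(s-s'))^(k+1) with hCdef
    refine ((base s' hs').const_mul C).mono hmeas ?_
    filter_upwards with x
    by_cases hφx : φ x = 0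
    · simp [hφx]
    · by_cases hgx : g x = 0
      · have h0 : g x ^ s * |Real.log (g x)| ^ (k+1) * φ x = 0 := by simp [hgx]
        rw [h0, norm_zero]
        exact norm_nonneg _
      · have hgpos : 0 < g x := (hg0 x).lt_of_ne (Ne.symm hgx)
        have hglt : g x < 1 := h1 x hφx
        have hb := aux_log_bound (s - s') hεpos k hgpos hglt.le
        have hC : 0 ≤ C := by positivity
        rw [Real.norm_of_nonneg (mul_nonneg (mul_nonneg (Real.rpow_nonneg (hg0 x) _)
            (pow_nonneg (abs_nonneg _) _)) (hφ0 x)),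
          Real.norm_of_nonneg (mul_nonneg hC (mul_nonneg (Real.rpow_nonneg (hg0 x) _) (hφ0 x)))]
        have hsplit : g x ^ s = g x ^ s' * g x ^ (s - s') := by
          rw [← Real.rpow_add hgpos]; ring_nf
        have key : g x ^ s * |Real.log (g x)| ^ (k+1) ≤ C * g x ^ s' := by
          rw [hsplit]
          calc g x ^ s' * g x ^ (s-s') * |Real.log (g x)| ^ (k+1)
              = g x ^ s' * (g x ^ (s-s') * |Real.log (g x)| ^ (k+1)) := by ring
            _ ≤ g x ^ s' * C := by
                refine mul_le_mul_of_nonneg_left ?_ (Real.rpow_nonneg (hg0 x) _)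
                simpa [hCdef] using hb
            _ = C * g x ^ s' := mul_comm _ _
        calc g x ^ s * |Real.log (g x)| ^ (k+1) * φ x
            ≤ C * g x ^ s' * φ x := mul_le_mul_of_nonneg_right key (hφ0 x)
          _ = C * (g x ^ s' * φ x) := by ring

lemma aux_meas {α : Type*} [MeasurableSpace α] {μ : Measure α}
    {g φ : α → ℝ} (hg : Measurable g) (hφ : Measurable φ) (u : ℂ) (k : ℕ) :
    AEStronglyMeasurable
      (fun x => (g x : ℂ) ^ u * (Real.log (g x) : ℂ) ^ k * (φ x : ℂ)) μ :=
  ((((Complex.measurable_ofReal.comp hg).pow_const u).mul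
    ((Complex.measurable_ofReal.comp (Real.measurable_log.comp hg)).pow_const k)).mul
    (Complex.measurable_ofReal.comp hφ)).aestronglyMeasurable

lemma aux_hasDerivAt {α : Type*} [MeasurableSpace α] {μ : Measure α}
    {g φ : α → ℝ} (hg : Measurable g) (hφ : Measurable φ)
    (hg0 : ∀ x, 0 ≤ g x) (hφ0 : ∀ x, 0 ≤ φ x)
    (h1 : ∀ x, φ x ≠ 0 → g x < 1)
    {ρ : ℝ} (base : ∀ s : ℝ, ρ < s → Integrable (fun x => g x ^ s * φ x) μ)
    (k : ℕ) {s : ℂ} (hs : ρ < s.re) (hs0 : s ≠ 0) :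
    HasDerivAt (fun u : ℂ => ∫ x, (g x : ℂ) ^ u * (Real.log (g x) : ℂ) ^ k * (φ x : ℂ) ∂μ)
      (∫ x, (g x : ℂ) ^ s * (Real.log (g x) : ℂ) ^ (k+1) * (φ x : ℂ) ∂μ) s := by
  have habs : 0 < ‖s‖ := by
    simpa [norm_pos_iff] using hs0
  set ε : ℝ := min ((s.re - ρ)/2) (‖s‖ / 2) with hεdef
  have hε : 0 < ε := lt_min (by linarith) (by linarith)
  set m : ℝ := s.re - ε with hmdef
  have hm : ρ < m := by
    have : ε ≤ (s.re - ρ)/2 := min_le_left _ _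
    simp only [hmdef]; linarith
  have hball : ∀ u ∈ Metric.ball s ε, m ≤ u.re ∧ u ≠ 0 := by
    intro u hu
    rw [Metric.mem_ball, Complex.dist_eq] at hu
    constructor
    · have h := Complex.abs_re_le_norm (u - s)
      simp only [Complex.sub_re] at h
      have := abs_le.1 h
      simp only [hmdef]; linarith [this.1]
    · intro h
      subst h
      simp only [zero_sub, norm_neg] at hu
      have : ε ≤ ‖s‖ / 2 := min_le_right _ _
      linarith
  have key := hasDerivAt_integral_of_dominated_loc_of_deriv_le (μ := μ)
    (F := fun u x => (g x : ℂ) ^ u * (Real.log (g x) : ℂ) ^ k * (φ x : ℂ))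
    (F' := fun u x => (g x : ℂ) ^ u * (Real.log (g x) : ℂ) ^ (k+1) * (φ x : ℂ))
    (bound := fun x => g x ^ m * |Real.log (g x)| ^ (k+1) * φ x)
    (x₀ := s) (Metric.ball_mem_nhds s hε)
    (Filter.Eventually.of_forall fun u => aux_meas hg hφ u k)
    ?_ (aux_meas hg hφ s (k+1)) ?_
    (aux_integrable hg hφ hg0 hφ0 h1 base (k+1) m hm) ?_
  · exact key.2
  · -- Integrable (F s)
    refine (aux_integrable hg hφ hg0 hφ0 h1 base k s.re hs).mono
      (aux_meas hg hφ s k) (Filter.Eventually.of_forall fun x => ?_)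
    rcases eq_or_lt_of_le (hg0 x) with hgx | hgx
    · simp only [← hgx, Complex.ofReal_zero, Complex.zero_cpow hs0, zero_mul, norm_zero]
      exact norm_nonneg _
    · rw [Real.norm_of_nonneg (mul_nonneg (mul_nonneg (Real.rpow_nonneg (hg0 x) _)
        (pow_nonneg (abs_nonneg _) _)) (hφ0 x))]
      rw [norm_mul, norm_mul]
      simp only [Complex.norm_cpow_eq_rpow_re_of_pos hgx,
        norm_pow, Complex.norm_real, Real.norm_eq_abs, _root_.abs_of_nonneg (hφ0 x)]
      exact le_of_eq (by ring)
  · -- bound on F'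
    refine Filter.Eventually.of_forall fun x => fun u hu => ?_
    obtain ⟨hum, hu0⟩ := hball u hu
    by_cases hφx : φ x = 0
    · simp only [hφx, Complex.ofReal_zero, mul_zero, norm_zero]
      exact le_rfl
    · rcases eq_or_lt_of_le (hg0 x) with hgx | hgx
      · simp only [← hgx, Complex.ofReal_zero, Complex.zero_cpow hu0, zero_mul, norm_zero]
        exact mul_nonneg (mul_nonneg (Real.rpow_nonneg le_rfl _)
          (pow_nonneg (abs_nonneg _) _)) (hφ0 x)
      · rw [norm_mul, norm_mul]
        simp only [Complex.norm_cpow_eq_rpow_re_of_pos hgx,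
          norm_pow, Complex.norm_real, Real.norm_eq_abs, _root_.abs_of_nonneg (hφ0 x)]
        have h2 : g x ^ u.re ≤ g x ^ m :=
          Real.rpow_le_rpow_of_exponent_ge hgx (h1 x hφx).le hum
        exact mul_le_mul_of_nonneg_right (mul_le_mul_of_nonneg_right h2
          (pow_nonneg (abs_nonneg (Real.log (g x))) (k+1))) (hφ0 x)
  · -- HasDerivAt pointwise
    refine Filter.Eventually.of_forall fun x => fun u hu => ?_
    obtain ⟨hum, hu0⟩ := hball u hu
    rcases eq_or_lt_of_le (hg0 x) with hgx | hgx
    · simp only [← hgx]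
      have hcongr : (fun v : ℂ => ((0:ℝ):ℂ) ^ v * (Real.log 0 : ℂ) ^ k * (φ x : ℂ))
          =ᶠ[𝓝 u] fun _ => (0:ℂ) := by
        filter_upwards [isOpen_ne.eventually_mem hu0] with v hv
        simp [Complex.zero_cpow hv]
      have h0 : ((0:ℝ):ℂ) ^ u * (Real.log 0 : ℂ) ^ (k+1) * (φ x : ℂ) = 0 := by
        simp [Complex.zero_cpow hu0]
      rw [h0]
      exact (hasDerivAt_const u (0:ℂ)).congr_of_eventuallyEq hcongr
    · have hc : ((g x : ℝ) : ℂ) ≠ 0 := by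
        simpa using ne_of_gt hgx
      have hd : HasDerivAt (fun v : ℂ => ((g x : ℝ) : ℂ) ^ v)
          (((g x : ℝ) : ℂ) ^ u * Complex.log (g x)) u := by
        simpa using (hasDerivAt_id u).const_cpow (Or.inl hc)
      rw [← Complex.ofReal_log (hg0 x)] at hd
      have hthis := hd.mul_const ((Real.log (g x) : ℂ) ^ k * (φ x : ℂ))
      convert hthis using 1
      · rfl
      · funext v
        show (g x : ℂ) ^ v * (Real.log (g x) : ℂ) ^ k * (φ x : ℂ) = _
        ring
      · show (g x : ℂ) ^ u * (Real.log (g x) : ℂ) ^ (k+1) * (φ x : ℂ) = _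
        ring

lemma aux_iteratedDeriv {α : Type*} [MeasurableSpace α] {μ : Measure α}
    {g φ : α → ℝ} (hg : Measurable g) (hφ : Measurable φ)
    (hg0 : ∀ x, 0 ≤ g x) (hφ0 : ∀ x, 0 ≤ φ x)
    (h1 : ∀ x, φ x ≠ 0 → g x < 1)
    {ρ : ℝ} (base : ∀ s : ℝ, ρ < s → Integrable (fun x => g x ^ s * φ x) μ)
    (k : ℕ) {s : ℂ} (hs : ρ < s.re) (hs0 : s ≠ 0) :
    iteratedDeriv k (fun u : ℂ => ∫ x, (g x : ℂ) ^ u * (φ x : ℂ) ∂μ) s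
      = ∫ x, (g x : ℂ) ^ s * (Real.log (g x) : ℂ) ^ k * (φ x : ℂ) ∂μ := by
  have hW : IsOpen {u : ℂ | ρ < u.re ∧ u ≠ 0} :=
    (isOpen_lt continuous_const Complex.continuous_re).inter isOpen_ne
  induction k generalizing s with
  | zero => simp
  | succ k ih =>
    rw [iteratedDeriv_succ]
    have hev : iteratedDeriv k (fun u : ℂ => ∫ x, (g x : ℂ) ^ u * (φ x : ℂ) ∂μ)
        =ᶠ[𝓝 s] fun u => ∫ x, (g x : ℂ) ^ u * (Real.log (g x) : ℂ) ^ k * (φ x : ℂ) ∂μ := by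
      filter_upwards [hW.eventually_mem ⟨hs, hs0⟩] with u hu
      exact ih hu.1 hu.2
    rw [hev.deriv_eq]
    exact (aux_hasDerivAt hg hφ hg0 hφ0 h1 base k hs hs0).deriv

theorem landau_type_local_zeta
    (n : ℕ) (f φ : (Fin n → ℝ) → ℝ) (U : Set (Fin n → ℝ))
    (hU : IsOpen U) (hU0 : (0 : Fin n → ℝ) ∈ U)
    (hf : Measurable f) (hφ : Measurable φ)
    (hφ0 : ∀ x, 0 ≤ φ x) (hf0 : f 0 = 0)
    (hf1 : ∀ x ∈ U, |f x| < 1)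
    (hsupp : Function.support φ ⊆ U)
    (ρ : ℝ) (hρ : ρ ≤ 0)
    (hconv : ∀ s : ℝ, ρ < s → Integrable (fun x => |f x| ^ s * φ x))
    (V : Set ℂ) (hV : IsOpen V) (hρV : (ρ : ℂ) ∈ V)
    (Z' : ℂ → ℂ)
    (hZ'hol : DifferentiableOn ℂ Z' (V ∪ {s : ℂ | ρ < s.re}))
    (hagree : ∀ s : ℂ, ρ < s.re →
      Z' s = ∫ x, ((|f x| : ℝ) : ℂ) ^ s * (φ x : ℂ)) :
    ∃ δ : ℝ, 0 < δ ∧ Integrable (fun x => |f x| ^ (ρ - δ) * φ x) := by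
  have hg : Measurable fun x => |f x| := hf.abs
  have hg0 : ∀ x, (0:ℝ) ≤ |f x| := fun x => abs_nonneg _
  have h1 : ∀ x, φ x ≠ 0 → |f x| < 1 := fun x hx => hf1 x (hsupp hx)
  -- geometry
  obtain ⟨c, hc, hcV⟩ := Metric.isOpen_iff.1 hV _ hρV
  set c₁ : ℝ := if ρ = 0 then c else min c (-ρ) with hc₁def
  have hρneg : ρ ≠ 0 → ρ < 0 := fun h => lt_of_le_of_ne hρ h
  have hc₁pos : 0 < c₁ := by
    by_cases h : ρ = 0
    · simp [hc₁def, h, hc]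
    · simp only [hc₁def, if_neg h]
      exact lt_min hc (by linarith [hρneg h])
  have hc₁le : c₁ ≤ c := by
    by_cases h : ρ = 0
    · simp [hc₁def, h]
    · simp only [hc₁def, if_neg h]; exact min_le_left _ _
  set a : ℝ := ρ + c₁/2 with hadef
  have haρ : ρ < a := by simp only [hadef]; linarith
  have ha0 : a ≠ 0 := by
    by_cases h : ρ = 0
    · simp only [hadef, h, zero_add]; positivity
    · have h2 : c₁ ≤ -ρ := by simp only [hc₁def, if_neg h]; exact min_le_right _ _
      have h3 := hρneg h
      simp only [hadef]
      exact ne_of_lt (by linarith)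
  set r : ℝ := Real.sqrt (c₁^2/2) with hrdef
  have hr2 : r^2 = c₁^2/2 := Real.sq_sqrt (by positivity)
  have hrpos : 0 < r := Real.sqrt_pos.2 (by positivity)
  have hhalf : c₁/2 < r := by nlinarith
  set δ : ℝ := (r - c₁/2)/2 with hδdef
  have hδ : 0 < δ := by simp only [hδdef]; linarith
  set s₀ : ℝ := ρ - δ with hs₀def
  have hs₀lt : s₀ < ρ := by simp only [hs₀def]; linarith
  have hs₀ne : s₀ ≠ 0 := ne_of_lt (lt_of_lt_of_le hs₀lt hρ)
  have has₀ : 0 < a - s₀ := by linarith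
  -- ball inclusion
  have hball : Metric.ball (↑a : ℂ) r ⊆ V ∪ {s : ℂ | ρ < s.re} := by
    intro z hz
    by_cases hre : ρ < z.re
    · exact Or.inr hre
    · left
      apply hcV
      rw [Metric.mem_ball, Complex.dist_eq_re_im] at hz ⊢
      simp only [Complex.ofReal_re, Complex.ofReal_im, sub_zero] at hz ⊢
      rw [Real.sqrt_lt' hrpos] at hz
      rw [Real.sqrt_lt' hc]
      have hre' : z.re ≤ ρ := not_lt.1 hre
      have h3 : 0 ≤ (ρ - z.re) * c₁ := mul_nonneg (by linarith) hc₁pos.le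
      nlinarith
  -- the point s₀ lies in the ball
  have hz₀ : ((s₀ : ℝ) : ℂ) ∈ Metric.ball (↑a : ℂ) r := by
    rw [Metric.mem_ball,
      show dist ((s₀:ℝ):ℂ) ((a:ℝ):ℂ) = |s₀ - a| by rw [Complex.dist_eq]; norm_cast]
    rw [abs_of_neg (by linarith : s₀ - a < 0)]
    simp only [hs₀def, hδdef, hadef]
    linarith
  have hsum := Complex.hasSum_taylorSeries_on_ball (hZ'hol.mono hball) hz₀
  have haRe : ρ < ((a:ℝ):ℂ).re := by simpa using haρ
  have haC0 : ((a:ℝ):ℂ) ≠ 0 := by exact_mod_cast ha0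
  have hFev : Z' =ᶠ[𝓝 ((a:ℝ):ℂ)]
      (fun u : ℂ => ∫ x, ((|f x| : ℝ) : ℂ) ^ u * (φ x : ℂ)) := by
    filter_upwards [(isOpen_lt continuous_const Complex.continuous_re).eventually_mem haRe]
      with u hu
    exact hagree u hu
  have hId : ∀ k : ℕ, iteratedDeriv k Z' ((a:ℝ):ℂ)
      = ((∫ x, |f x| ^ a * (Real.log |f x|) ^ k * φ x : ℝ) : ℂ) := by
    intro k
    rw [hFev.iteratedDeriv_eq k,
      aux_iteratedDeriv hg hφ hg0 hφ0 h1 hconv k haRe haC0,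
      show ((∫ x, |f x| ^ a * (Real.log |f x|) ^ k * φ x : ℝ) : ℂ)
        = ∫ x, ((|f x| ^ a * (Real.log |f x|) ^ k * φ x : ℝ) : ℂ) from integral_ofReal.symm]
    congr 1
    funext x
    rw [← Complex.ofReal_cpow (hg0 x) a]
    push_cast
    ring
  set J : ℕ → ℝ := fun k => ∫ x, |f x| ^ a * (-Real.log |f x|) ^ k * φ x with hJdef
  set uu : ℕ → ℝ := fun k => ((k.factorial : ℝ))⁻¹ * (a - s₀)^k * J k with huudef
  have hIJ : ∀ k : ℕ, (∫ x, |f x| ^ a * (Real.log |f x|) ^ k * φ x) = (-1:ℝ)^k * J k := by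
    intro k
    simp only [hJdef]
    rw [← integral_const_mul]
    congr 1
    funext x
    have hkey : ((-1:ℝ))^k * (-Real.log |f x|)^k = (Real.log |f x|)^k := by
      rw [← mul_pow]; congr 1; ring
    rw [← hkey]; ring
  have hterm : ∀ k : ℕ, (k.factorial : ℂ)⁻¹ • (((s₀:ℝ):ℂ) - ((a:ℝ):ℂ))^k •
      iteratedDeriv k Z' ((a:ℝ):ℂ) = ((uu k : ℝ) : ℂ) := by
    intro k
    have hkey : (((s₀:ℝ):ℂ) - ((a:ℝ):ℂ))^k * ((-1:ℂ))^k = (((a:ℝ):ℂ) - ((s₀:ℝ):ℂ))^k := by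
      rw [← mul_pow]; congr 1; ring
    rw [hId k, hIJ k]
    simp only [smul_eq_mul, huudef]
    push_cast
    rw [← hkey]
    ring
  have hsummable : Summable uu := by
    have h2 := hsum.summable
    rw [show (fun k => (k.factorial : ℂ)⁻¹ • (((s₀:ℝ):ℂ) - ((a:ℝ):ℂ))^k •
        iteratedDeriv k Z' ((a:ℝ):ℂ)) = fun k => ((uu k : ℝ) : ℂ) from funext hterm] at h2
    exact Complex.summable_ofReal.1 h2
  -- nonnegativity
  have hptw : ∀ k x, 0 ≤ |f x| ^ a * (-Real.log |f x|) ^ k * φ x := by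
    intro k x
    by_cases hφx : φ x = 0
    · simp [hφx]
    · refine mul_nonneg (mul_nonneg (Real.rpow_nonneg (hg0 x) _) (pow_nonneg ?_ _)) (hφ0 x)
      have := Real.log_nonpos (hg0 x) (h1 x hφx).le
      linarith
  have hJnonneg : ∀ k, 0 ≤ J k := fun k => integral_nonneg (hptw k)
  have huunn : ∀ k, 0 ≤ uu k := fun k => by
    simp only [huudef]
    exact mul_nonneg (mul_nonneg (by positivity) (pow_nonneg has₀.le _)) (hJnonneg k)
  -- w
  set w : ℕ → (Fin n → ℝ) → ℝ := fun k x =>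
    ((k.factorial : ℝ))⁻¹ * (a - s₀)^k * (|f x| ^ a * (-Real.log |f x|) ^ k * φ x) with hwdef
  have hw_nonneg : ∀ k x, 0 ≤ w k x := fun k x =>
    mul_nonneg (mul_nonneg (by positivity) (pow_nonneg has₀.le _)) (hptw k x)
  have hw_meas : ∀ k, Measurable (w k) := fun k =>
    measurable_const.mul (((hg.pow_const a).mul
      (((Real.measurable_log.comp hg).neg).pow_const k)).mul hφ)
  have hw_int : ∀ k, Integrable (w k) := by
    intro k
    have hbase : Integrable (fun x => |f x| ^ a * (_root_.abs (Real.log |f x|)) ^ k * φ x) :=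
      aux_integrable hg hφ hg0 hφ0 h1 hconv k a haρ
    have hmain : Integrable (fun x => |f x| ^ a * (-Real.log |f x|) ^ k * φ x) := by
      refine hbase.mono ((((hg.pow_const a).mul
        (((Real.measurable_log.comp hg).neg).pow_const k)).mul hφ).aestronglyMeasurable)
        (Filter.Eventually.of_forall fun x => ?_)
      by_cases hφx : φ x = 0
      · simp [hφx]
      · rw [Real.norm_of_nonneg (hptw k x), Real.norm_of_nonneg (mul_nonneg (mul_nonneg
          (Real.rpow_nonneg (hg0 x) _) (pow_nonneg (abs_nonneg _) _)) (hφ0 x))]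
        have hL : 0 ≤ -Real.log |f x| := by
          have := Real.log_nonpos (hg0 x) (h1 x hφx).le
          linarith
        have hle : (-Real.log |f x|) ^ k ≤ (_root_.abs (Real.log |f x|)) ^ k :=
          pow_le_pow_left₀ hL (neg_le_abs _) k
        exact mul_le_mul_of_nonneg_right
          (mul_le_mul_of_nonneg_left hle (Real.rpow_nonneg (hg0 x) _)) (hφ0 x)
    exact hmain.const_mul _
  have hw_sum : ∀ x, HasSum (fun k => w k x) (|f x| ^ s₀ * φ x) := by
    intro x
    have hq := NormedSpace.expSeries_div_hasSum_exp ((a - s₀) * (-Real.log |f x|))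
    have hqK := hq.mul_right (|f x| ^ a * φ x)
    have heq : (fun k : ℕ => ((a - s₀) * (-Real.log |f x|))^k / (k.factorial : ℝ)
        * (|f x| ^ a * φ x)) = fun k => w k x := by
      funext k
      simp only [hwdef, mul_pow]
      ring
    rw [heq] at hqK
    have hval : NormedSpace.exp ((a - s₀) * (-Real.log |f x|)) * (|f x| ^ a * φ x)
        = |f x| ^ s₀ * φ x := by
      rw [← Real.exp_eq_exp_ℝ]
      rcases eq_or_lt_of_le (hg0 x) with hgx | hgx
      · rw [← hgx, Real.zero_rpow ha0, Real.zero_rpow hs₀ne]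
        simp
      · rw [show (a - s₀) * (-Real.log |f x|) = Real.log |f x| * (s₀ - a) by ring,
          ← Real.rpow_def_of_pos hgx]
        rw [← mul_assoc, ← Real.rpow_add hgx]
        ring_nf
    rwa [hval] at hqK
  have hu_int : ∀ k, ∫ x, w k x = uu k := by
    intro k
    simp only [hwdef, huudef]
    rw [integral_const_mul]
  -- lintegral chain
  have hmeasf : Measurable fun x => |f x| ^ s₀ * φ x := (hg.pow_const s₀).mul hφ
  have hnonnegf : ∀ x, 0 ≤ |f x| ^ s₀ * φ x := fun x =>
    mul_nonneg (Real.rpow_nonneg (hg0 x) _) (hφ0 x)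
  have hlint : ∫⁻ x, ENNReal.ofReal (|f x| ^ s₀ * φ x) < ⊤ := by
    have step1 : ∫⁻ x, ENNReal.ofReal (|f x| ^ s₀ * φ x)
        = ∫⁻ x, ∑' k, ENNReal.ofReal (w k x) := by
      refine lintegral_congr fun x => ?_
      rw [← (hw_sum x).tsum_eq,
        ENNReal.ofReal_tsum_of_nonneg (fun k => hw_nonneg k x) (hw_sum x).summable]
    have step2 : ∫⁻ x, ∑' k, ENNReal.ofReal (w k x)
        = ∑' k, ∫⁻ x, ENNReal.ofReal (w k x) :=
      lintegral_tsum fun k => ((hw_meas k).ennreal_ofReal).aemeasurable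
    have step3 : ∀ k, ∫⁻ x, ENNReal.ofReal (w k x) = ENNReal.ofReal (uu k) := by
      intro k
      rw [← hu_int k]
      exact (ofReal_integral_eq_lintegral_ofReal (hw_int k)
        (Filter.Eventually.of_forall (hw_nonneg k))).symm
    rw [step1, step2]
    simp only [step3]
    rw [← ENNReal.ofReal_tsum_of_nonneg huunn hsummable]
    exact ENNReal.ofReal_lt_top
  refine ⟨δ, hδ, ?_⟩
  refine ⟨hmeasf.aestronglyMeasurable, ?_⟩
  rw [hasFiniteIntegral_iff_ofReal (Filter.Eventually.of_forall hnonnegf)]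
  exact hlint
end

section
/- Let a, b, q be integers with 0 ≤ a < b, 2 ≤ b, 1 ≤ q ≤ b, let 0 < p < 1 - a/b, and let ρ̃ > 0. For σ ∈ (-1/b, 0) set X = bσ + 1 and J₁(σ) = ∫₀^{ρ̃} x^{aσ}·(1 − e(x)^X)/X dx with e(x) = exp(-1/(q·x^p)). Then lim_{σ → -1/b⁺} J₁(σ) = ρ̃^{1 - a/b - p}/(q·(1 - a/b - p)). -/
set_option maxHeartbeats 1000000


open Real Filter Set Topology MeasureTheory

theorem J₁_limit
    (a b q : ℕ) (hab : a < b) (hb : 2 ≤ b) (hq1 : 1 ≤ q) (hqb : q ≤ b)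
    (p : ℝ) (hp0 : 0 < p) (hp : p < 1 - (a:ℝ)/b)
    (ρ' : ℝ) (hρ' : 0 < ρ') :
    Tendsto (fun σ : ℝ => ∫ x in Set.Ioc (0:ℝ) ρ',
        x ^ ((a:ℝ) * σ) *
          ((1 - (Real.exp (-1 / (q * x ^ p))) ^ ((b:ℝ) * σ + 1)) / ((b:ℝ) * σ + 1)))
      (nhdsWithin (-1/(b:ℝ)) (Set.Ioi (-1/(b:ℝ))))
      (nhds (ρ' ^ (1 - (a:ℝ)/b - p) / (q * (1 - (a:ℝ)/b - p)))) := by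
  have hb0 : (0:ℝ) < b := by positivity
  have hq0 : (0:ℝ) < q := by exact_mod_cast hq1
  have ha0 : (0:ℝ) ≤ a := by positivity
  have hab' : (0:ℝ) ≤ (a:ℝ)/b := by positivity
  set l := nhdsWithin (-1/(b:ℝ)) (Set.Ioi (-1/(b:ℝ))) with hl
  set r : ℝ := -((a:ℝ)/b) - p with hrdef
  have hr : -1 < r := by rw [hrdef]; linarith
  have hr1 : 0 < r + 1 := by linarith
  have hp1 : p < 1 := by linarith
  set f : ℝ → ℝ := fun x => x ^ (-((a:ℝ)/b)) * (1 / (q * x ^ p)) with hf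
  set g : ℝ → ℝ := fun x => (1 + x ^ (-((a:ℝ)/b))) * (x ^ (-p) / q) with hg
  set F : ℝ → ℝ → ℝ := fun σ x =>
    x ^ ((a:ℝ) * σ) *
      ((1 - (Real.exp (-1 / (q * x ^ p))) ^ ((b:ℝ) * σ + 1)) / ((b:ℝ) * σ + 1)) with hF
  -- eventually σ ∈ Ioo (-1/b) 0
  have hev : ∀ᶠ σ in l, σ ∈ Set.Ioo (-1/(b:ℝ)) 0 := by
    have h1 : ∀ᶠ σ in l, σ ∈ Set.Ioi (-1/(b:ℝ)) := eventually_mem_nhdsWithin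
    have h2 : ∀ᶠ σ in l, σ < 0 :=
      (eventually_lt_nhds (show -1/(b:ℝ) < 0 from div_neg_of_neg_of_pos (by norm_num) hb0)).filter_mono nhdsWithin_le_nhds
    filter_upwards [h1, h2] with σ hσ1 hσ2 using ⟨hσ1, hσ2⟩
  -- measurability
  have hmeas : ∀ σ : ℝ, AEStronglyMeasurable (F σ) (volume.restrict (Set.Ioc (0:ℝ) ρ')) := by
    intro σ
    apply Measurable.aestronglyMeasurable
    fun_prop
  -- bound
  have hbound : ∀ᶠ σ in l, ∀ᵐ x ∂(volume.restrict (Set.Ioc (0:ℝ) ρ')), ‖F σ x‖ ≤ g x := by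
    filter_upwards [hev] with σ hσ
    rw [ae_restrict_iff' measurableSet_Ioc]
    filter_upwards with x hx
    obtain ⟨hx0, hxρ⟩ := hx
    obtain ⟨hσ1, hσ2⟩ := hσ
    set X : ℝ := (b:ℝ) * σ + 1 with hX
    have hX0 : 0 < X := by
      have h := (div_lt_iff₀ hb0).mp hσ1
      rw [hX, mul_comm]; linarith
    set c : ℝ := 1 / ((q:ℝ) * x ^ p) with hc
    have hxp : 0 < x ^ p := Real.rpow_pos_of_pos hx0 p
    have hc0 : 0 < c := by positivity
    have hexp : (Real.exp (-1 / (q * x ^ p))) ^ X = Real.exp (-(c * X)) := by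
      rw [Real.rpow_def_of_pos (Real.exp_pos _), Real.log_exp]
      congr 1
      rw [hc]; ring
    have hnum0 : 0 ≤ 1 - Real.exp (-(c * X)) := by
      have : Real.exp (-(c * X)) ≤ 1 := Real.exp_le_one_iff.mpr (by nlinarith)
      linarith
    have hnum : 1 - Real.exp (-(c * X)) ≤ c * X := by
      have := Real.add_one_le_exp (-(c * X))
      linarith
    have hF1 : F σ x = x ^ ((a:ℝ) * σ) * ((1 - Real.exp (-(c * X))) / X) := by
      rw [hF]; simp only []; rw [hexp]
    have hFnn : 0 ≤ F σ x := by
      rw [hF1]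
      exact mul_nonneg (Real.rpow_nonneg hx0.le _) (div_nonneg hnum0 hX0.le)
    rw [Real.norm_eq_abs, abs_of_nonneg hFnn, hF1]
    have hterm1 : x ^ ((a:ℝ) * σ) ≤ 1 + x ^ (-((a:ℝ)/b)) := by
      rcases le_or_gt x 1 with hx1 | hx1
      · have h1 : -((a:ℝ)/b) ≤ (a:ℝ) * σ := by
          have : (a:ℝ) * (-1/b) ≤ (a:ℝ) * σ := mul_le_mul_of_nonneg_left hσ1.le ha0
          calc -((a:ℝ)/b) = (a:ℝ) * (-1/b) := by ring
          _ ≤ (a:ℝ) * σ := this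
        have := Real.rpow_le_rpow_of_exponent_ge hx0 hx1 h1
        have h0 : (0:ℝ) ≤ x ^ (-((a:ℝ)/b)) := Real.rpow_nonneg hx0.le _
        linarith
      · have : x ^ ((a:ℝ) * σ) ≤ 1 :=
          Real.rpow_le_one_of_one_le_of_nonpos hx1.le (by nlinarith)
        have h0 : (0:ℝ) ≤ x ^ (-((a:ℝ)/b)) := Real.rpow_nonneg hx0.le _
        linarith
    have hterm2 : (1 - Real.exp (-(c * X))) / X ≤ x ^ (-p) / q := by
      have h1 : (1 - Real.exp (-(c * X))) / X ≤ c := by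
        rw [div_le_iff₀ hX0]; linarith
      have h2 : c = x ^ (-p) / q := by
        rw [hc, Real.rpow_neg hx0.le]
        field_simp
      linarith
    rw [hg]
    exact mul_le_mul hterm1 hterm2 (div_nonneg hnum0 hX0.le)
      (by positivity)
  -- integrability of bound
  have hint_rpow : ∀ s : ℝ, -1 < s → IntegrableOn (fun x : ℝ => x ^ s) (Set.Ioc (0:ℝ) ρ') := by
    intro s hs
    have := intervalIntegral.intervalIntegrable_rpow' (a := 0) (b := ρ') hs
    rwa [intervalIntegrable_iff_integrableOn_Ioc_of_le hρ'.le] at this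
  have hg_int : Integrable g (volume.restrict (Set.Ioc (0:ℝ) ρ')) := by
    have h1 : IntegrableOn (fun x : ℝ => (x ^ (-p) + x ^ r) / q) (Set.Ioc (0:ℝ) ρ') :=
      ((hint_rpow (-p) (by linarith)).add (hint_rpow r hr)).div_const _
    apply h1.congr_fun _ measurableSet_Ioc
    intro x hx
    have hx0 : 0 < x := hx.1
    rw [hg]
    have : x ^ (-((a:ℝ)/b)) * x ^ (-p) = x ^ r := by
      rw [← Real.rpow_add hx0, hrdef]; ring_nf
    field_simp
    rw [← this]; ring
  -- pointwise limit
  have hlim : ∀ᵐ x ∂(volume.restrict (Set.Ioc (0:ℝ) ρ')),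
      Tendsto (fun σ => F σ x) l (𝓝 (f x)) := by
    rw [ae_restrict_iff' measurableSet_Ioc]
    filter_upwards with x hx
    have hx0 : 0 < x := hx.1
    have hxp : 0 < x ^ p := Real.rpow_pos_of_pos hx0 p
    set c : ℝ := 1 / ((q:ℝ) * x ^ p) with hc
    have hc0 : 0 < c := by positivity
    have hexp : ∀ X : ℝ, (Real.exp (-1 / (q * x ^ p))) ^ X = Real.exp (-(c * X)) := by
      intro X
      rw [Real.rpow_def_of_pos (Real.exp_pos _), Real.log_exp]
      congr 1
      rw [hc]; ring
    have hFeq : (fun σ => F σ x) = fun σ =>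
        x ^ ((a:ℝ) * σ) *
          ((1 - Real.exp (-(c * ((b:ℝ) * σ + 1)))) / ((b:ℝ) * σ + 1)) := by
      funext σ; rw [hF]; simp only []; rw [hexp]
    rw [hFeq]
    -- first factor
    have h1 : Tendsto (fun σ : ℝ => x ^ ((a:ℝ) * σ)) l (𝓝 (x ^ (-((a:ℝ)/b)))) := by
      have hcont : Continuous fun σ : ℝ => x ^ ((a:ℝ) * σ) := by
        have : (fun σ : ℝ => x ^ ((a:ℝ) * σ))
            = fun σ : ℝ => Real.exp (Real.log x * ((a:ℝ) * σ)) := by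
          funext σ; exact Real.rpow_def_of_pos hx0 _
        rw [this]; fun_prop
      have := hcont.continuousAt (x := -1/(b:ℝ)).tendsto
      have heq : (a:ℝ) * (-1/(b:ℝ)) = -((a:ℝ)/b) := by ring
      rw [heq] at this
      exact this.mono_left nhdsWithin_le_nhds
    -- second factor
    have hXt : Tendsto (fun σ : ℝ => (b:ℝ) * σ + 1) l (𝓝[≠] (0:ℝ)) := by
      rw [tendsto_nhdsWithin_iff]
      constructor
      · have hcont : Continuous fun σ : ℝ => (b:ℝ) * σ + 1 := by fun_prop
        have := (hcont.continuousAt (x := -1/(b:ℝ))).tendsto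
        have heq : (b:ℝ) * (-1/(b:ℝ)) + 1 = 0 := by field_simp; ring
        rw [heq] at this
        exact this.mono_left nhdsWithin_le_nhds
      · filter_upwards [eventually_mem_nhdsWithin] with σ hσ
        have h := (div_lt_iff₀ hb0).mp hσ
        have h2 : (0:ℝ) < (b:ℝ) * σ + 1 := by rw [mul_comm]; linarith
        exact ne_of_gt h2
    have hD : HasDerivAt (fun X : ℝ => 1 - Real.exp (-(c * X))) c 0 := by
      have h1 : HasDerivAt (fun X : ℝ => -(c * X)) (-c) 0 := by
        exact (((hasDerivAt_id (0:ℝ)).const_mul c).neg).congr_deriv (by simp)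
      have h2 := h1.exp
      have h3 := h2.const_sub 1
      simpa using h3
    have hslope := hasDerivAt_iff_tendsto_slope.mp hD
    have hslope_eq : slope (fun X : ℝ => 1 - Real.exp (-(c * X))) 0
        = fun X : ℝ => (1 - Real.exp (-(c * X))) / X := by
      funext y
      rw [slope_def_field]
      simp
    rw [hslope_eq] at hslope
    have h2 : Tendsto
        (fun σ : ℝ => (1 - Real.exp (-(c * ((b:ℝ) * σ + 1)))) / ((b:ℝ) * σ + 1))
        l (𝓝 c) := hslope.comp hXt
    have := h1.mul h2
    rw [hf]; simp only []
    rw [hc] at this ⊢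
    exact this
  -- apply dominated convergence
  have key := MeasureTheory.tendsto_integral_filter_of_dominated_convergence
    (μ := volume.restrict (Set.Ioc (0:ℝ) ρ')) (F := F) (f := f) (l := l) g
    (Filter.Eventually.of_forall hmeas) hbound hg_int hlim
  -- compute limit integral
  have hval : ∫ x in Set.Ioc (0:ℝ) ρ', f x
      = ρ' ^ (1 - (a:ℝ)/b - p) / (q * (1 - (a:ℝ)/b - p)) := by
    have h1 : ∫ x in Set.Ioc (0:ℝ) ρ', f x = ∫ x in Set.Ioc (0:ℝ) ρ', x ^ r / q := by
      apply MeasureTheory.setIntegral_congr_fun measurableSet_Ioc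
      intro x hx
      have hx0 : 0 < x := hx.1
      have hxp : 0 < x ^ p := Real.rpow_pos_of_pos hx0 p
      have h2 : x ^ (-((a:ℝ)/b)) * x ^ (-p) = x ^ r := by
        rw [← Real.rpow_add hx0, hrdef]; ring_nf
      rw [hf]; simp only []
      rw [← h2, Real.rpow_neg hx0.le p]
      field_simp
    rw [h1]
    have h3 : ∫ x in Set.Ioc (0:ℝ) ρ', x ^ r / q = (∫ x in Set.Ioc (0:ℝ) ρ', x ^ r) / q :=
      integral_div _ _
    rw [h3]
    have h4 : ∫ x in Set.Ioc (0:ℝ) ρ', x ^ r = ∫ x in (0:ℝ)..ρ', x ^ r :=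
      (intervalIntegral.integral_of_le hρ'.le).symm
    rw [h4, integral_rpow (Or.inl hr), Real.zero_rpow (ne_of_gt hr1)]
    have hrr : r + 1 = 1 - (a:ℝ)/b - p := by rw [hrdef]; ring
    rw [hrr]
    rw [div_div]
    ring_nf
  rw [hval] at key
  exact key
end

section
/- Let b ≥ 2 and q ≥ 1 be integers, 0 ≤ a < b an integer, p > 0, r₁, r₂ ∈ (0,1), λ > 0. Define L(λ) = (ρ(λr₂)^{1-a/b}/(1-a/b))·log(λr₂) + ρ(λr₂)^{1-a/b-p}/(q·(1-a/b-p)) and M(λ) = (b²/(q(b-a)))·λ^{-q/b}·ρ(λr₂)^{1-a/b} + (b/q)·r₂^{q/b}·∫_{ρ(λr₂)}^{r₁} x^{-a/b}·exp(1/(b·x^p)) dx, where ρ(y) = (−1/(q·log y))^{1/p} for 0 < y < exp(-1/(q·r₁^p)) and ρ(y) = r₁ for y ≥ exp(-1/(q·r₁^p)). Assume 0 < p < 1 - a/b. Then lim_{λ→0⁺} L(λ) = 0, lim_{λ→0⁺} M(λ) = ∞, lim_{λ→∞} L(λ) = ∞, and lim_{λ→∞} M(λ) = 0. -/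
open Real Filter Set Topology MeasureTheory
set_option maxHeartbeats 1000000

noncomputable def rhoFun (q : ℕ) (p r₁ : ℝ) (y : ℝ) : ℝ :=
  if y < Real.exp (-1 / (q * r₁ ^ p)) then (-1 / (q * Real.log y)) ^ (1/p) else r₁



lemma cont_f (a b : ℕ) (p : ℝ) (hb : 0 < b) {s : Set ℝ} (hs : ∀ x ∈ s, 0 < x) :
    ContinuousOn (fun x : ℝ => x ^ (-(a:ℝ)/b) * Real.exp (1 / (b * x ^ p))) s := by
  apply continuousOn_of_forall_continuousAt
  intro x hx
  have hx0 : x ≠ 0 := ne_of_gt (hs x hx)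
  have hxp : (0:ℝ) < x ^ p := Real.rpow_pos_of_pos (hs x hx) p
  have hden : (b:ℝ) * x ^ p ≠ 0 := by positivity
  exact (Real.continuousAt_rpow_const x _ (Or.inl hx0)).mul
    (Real.continuous_exp.continuousAt.comp
      (continuousAt_const.div ((continuousAt_const.mul
        (Real.continuousAt_rpow_const x p (Or.inl hx0)))) hden))

lemma integrable_f (a b : ℕ) (p : ℝ) (hb : 0 < b) {t r₁ : ℝ} (ht : 0 < t) :
    IntegrableOn (fun x : ℝ => x ^ (-(a:ℝ)/b) * Real.exp (1 / (b * x ^ p)))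
      (Set.Ioc t r₁) := by
  apply ((cont_f a b p hb (s := Set.Icc t r₁) ?_).integrableOn_Icc).mono_set
    Set.Ioc_subset_Icc_self
  exact fun x hx => lt_of_lt_of_le ht hx.1

lemma tendsto_intF (a b : ℕ) (p : ℝ) (hp0 : 0 < p) (hb : 0 < b)
    {r₁ : ℝ} (hr₁ : 0 < r₁) (hr₁1 : r₁ < 1) :
    Tendsto (fun t => ∫ x in Set.Ioc t r₁, x ^ (-(a:ℝ)/b) * Real.exp (1 / (b * x ^ p)))
      (𝓝[>] (0:ℝ)) atTop := by
  obtain ⟨n, hn⟩ : ∃ n : ℕ, 1 ≤ (n:ℝ) * p := by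
    obtain ⟨n, hn⟩ := exists_nat_ge (1/p)
    exact ⟨n, by rw [div_le_iff₀ hp0] at hn; linarith⟩
  set C : ℝ := 1 / (n.factorial * b ^ n) with hCdef
  have hC : 0 < C := by positivity
  have key : ∀ t ∈ Set.Ioo (0:ℝ) r₁,
      C * (Real.log r₁ - Real.log t)
        ≤ ∫ x in Set.Ioc t r₁, x ^ (-(a:ℝ)/b) * Real.exp (1 / (b * x ^ p)) := by
    intro t ht
    have hint : ∫ x in Set.Ioc t r₁, C * x⁻¹ = C * (Real.log r₁ - Real.log t) := by
      rw [← intervalIntegral.integral_of_le ht.2.le, intervalIntegral.integral_const_mul,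
        integral_inv_of_pos ht.1 hr₁, Real.log_div (ne_of_gt hr₁) (ne_of_gt ht.1)]
    rw [← hint]
    apply MeasureTheory.setIntegral_mono_on ?_ (integrable_f a b p hb ht.1) measurableSet_Ioc
    · intro x hx
      have hx0 : 0 < x := lt_trans ht.1 hx.1
      have hx1 : x ≤ 1 := le_of_lt (lt_of_le_of_lt hx.2 hr₁1)
      have hxp : (0:ℝ) < x ^ p := Real.rpow_pos_of_pos hx0 p
      have hu : (0:ℝ) ≤ 1 / (b * x ^ p) := by positivity
      -- exp lower bound
      have hexp : (1 / ((b:ℝ) * x ^ p)) ^ n / n.factorial ≤ Real.exp (1 / (b * x ^ p)) := by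
        calc (1 / ((b:ℝ) * x ^ p)) ^ n / n.factorial
            ≤ ∑ i ∈ Finset.range (n+1), (1 / ((b:ℝ) * x ^ p)) ^ i / i.factorial := by
              apply Finset.single_le_sum (f := fun i => (1 / ((b:ℝ) * x ^ p)) ^ i / (i.factorial:ℝ))
                (fun i _ => by positivity) (Finset.self_mem_range_succ n)
          _ ≤ Real.exp (1 / (b * x ^ p)) := Real.sum_le_exp_of_nonneg hu _
      have h1 : (1 / ((b:ℝ) * x ^ p)) ^ n / n.factorial = C * (x ^ ((n:ℝ) * p))⁻¹ := by
        rw [div_pow, one_pow, mul_pow, ← Real.rpow_natCast (x ^ p) n, ← Real.rpow_mul hx0.le]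
        rw [hCdef]
        rw [mul_comm p (n:ℝ)]
        field_simp
      have h2 : x ^ (-(a:ℝ)/b) * Real.exp (1 / (b * x ^ p))
          ≥ x ^ (-(a:ℝ)/b) * (C * (x ^ ((n:ℝ) * p))⁻¹) := by
        rw [← h1]
        exact mul_le_mul_of_nonneg_left hexp (Real.rpow_nonneg hx0.le _)
      have h3 : x ^ (-(a:ℝ)/b) * (C * (x ^ ((n:ℝ) * p))⁻¹) = C * x ^ (-(a:ℝ)/b - (n:ℝ)*p) := by
        rw [Real.rpow_sub hx0, div_eq_mul_inv]
        ring
      have h4 : x ^ ((-1:ℝ)) ≤ x ^ (-(a:ℝ)/b - (n:ℝ)*p) := by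
        apply Real.rpow_le_rpow_of_exponent_ge hx0 hx1
        have h0 : -(a:ℝ)/b = -((a:ℝ)/b) := neg_div _ _
        have h0' : (0:ℝ) ≤ (a:ℝ)/b := by positivity
        rw [h0]; linarith
      calc C * x⁻¹ = C * x ^ ((-1:ℝ)) := by rw [Real.rpow_neg_one]
        _ ≤ C * x ^ (-(a:ℝ)/b - (n:ℝ)*p) := by
            exact mul_le_mul_of_nonneg_left h4 hC.le
        _ = x ^ (-(a:ℝ)/b) * (C * (x ^ ((n:ℝ) * p))⁻¹) := h3.symm
        _ ≤ _ := h2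
    · apply ((continuousOn_const.mul (continuousOn_inv₀.mono ?_)).integrableOn_Icc).mono_set
        Set.Ioc_subset_Icc_self
      intro x hx
      exact ne_of_gt (lt_of_lt_of_le ht.1 hx.1)
  apply tendsto_atTop_mono' _ ?_ ?_
  · exact fun t => C * (Real.log r₁ - Real.log t)
  · filter_upwards [Ioo_mem_nhdsGT_of_mem (show (0:ℝ) ∈ Set.Ico 0 r₁ from ⟨le_refl _, hr₁⟩)]
      with t ht using key t ht
  · apply Tendsto.const_mul_atTop hC
    have h := Real.tendsto_log_nhdsGT_zero
    have h2 : Tendsto (fun z : ℝ => Real.log r₁ - z) atBot atTop := by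
      have := tendsto_atTop_add_const_left atBot (Real.log r₁) tendsto_neg_atBot_atTop
      simpa [sub_eq_add_neg] using this
    exact h2.comp h

lemma tendsto_rho (q : ℕ) (hq1 : 1 ≤ q) (p r₁ : ℝ) (hp0 : 0 < p)
    (hr₁ : 0 < r₁) :
    Tendsto (fun y => rhoFun q p r₁ y) (𝓝[>] (0:ℝ)) (𝓝[>] (0:ℝ)) := by
  set T := Real.exp (-1 / (q * r₁ ^ p)) with hT
  have hq0 : (0:ℝ) < q := by exact_mod_cast hq1
  have hT0 : 0 < T := Real.exp_pos _
  have hT1 : T < 1 := by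
    rw [hT, Real.exp_lt_one_iff]
    have : (0:ℝ) < q * r₁ ^ p := by positivity
    rw [neg_div]
    simp [this]
    positivity
  have hmem : Set.Ioo (0:ℝ) T ∈ 𝓝[>] (0:ℝ) :=
    Ioo_mem_nhdsGT_of_mem ⟨le_refl _, hT0⟩
  have hX : ∀ y ∈ Set.Ioo (0:ℝ) T, 0 < -1 / (q * Real.log y) := by
    intro y hy
    have hlog : Real.log y < 0 := Real.log_neg hy.1 (lt_trans hy.2 hT1)
    have : q * Real.log y < 0 := mul_neg_of_pos_of_neg hq0 hlog
    rw [neg_div]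
    exact neg_pos.mpr (div_neg_of_pos_of_neg one_pos this)
  have heq : ∀ y ∈ Set.Ioo (0:ℝ) T,
      rhoFun q p r₁ y = (-1 / (q * Real.log y)) ^ (1/p) := by
    intro y hy
    rw [rhoFun, if_pos hy.2]
  rw [tendsto_nhdsWithin_iff]
  constructor
  · -- tendsto to 0
    have hXt : Tendsto (fun y : ℝ => -1 / (q * Real.log y)) (𝓝[>] 0) (𝓝 0) := by
      have h1 : Tendsto (fun y : ℝ => q * Real.log y) (𝓝[>] 0) atBot :=
        Tendsto.const_mul_atBot hq0 Real.tendsto_log_nhdsGT_zero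
      have h2 : Tendsto (fun z : ℝ => -1 / z) atBot (𝓝 0) := by
        have h3 := ((tendsto_inv_atTop_zero (𝕜 := ℝ)).comp (tendsto_neg_atBot_atTop : Tendsto (fun z : ℝ => -z) atBot atTop))
        apply h3.congr
        intro z
        simp [Function.comp, inv_neg, neg_div]
      exact h2.comp h1
    have hcont : ContinuousAt (fun x : ℝ => x ^ (1/p)) 0 :=
      Real.continuousAt_rpow_const 0 (1/p) (Or.inr (by positivity))
    have := hcont.tendsto.comp hXt
    rw [Real.zero_rpow (by positivity : (1:ℝ)/p ≠ 0)] at this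
    apply this.congr'
    filter_upwards [hmem] with y hy
    exact (heq y hy).symm
  · filter_upwards [hmem] with y hy
    rw [heq y hy]
    exact Real.rpow_pos_of_pos (hX y hy) _

noncomputable def Lconst (a b q : ℕ) (p r₁ r₂ : ℝ) (lam : ℝ) : ℝ :=
  (rhoFun q p r₁ (lam * r₂)) ^ (1 - (a:ℝ)/b) / (1 - (a:ℝ)/b) * Real.log (lam * r₂)
    + (rhoFun q p r₁ (lam * r₂)) ^ (1 - (a:ℝ)/b - p) / (q * (1 - (a:ℝ)/b - p))

noncomputable def Mconst (a b q : ℕ) (p r₁ r₂ : ℝ) (lam : ℝ) : ℝ :=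
  ((b:ℝ)^2 / (q * ((b:ℝ) - a))) * lam ^ (-(q:ℝ)/b) *
      (rhoFun q p r₁ (lam * r₂)) ^ (1 - (a:ℝ)/b)
    + ((b:ℝ)/q) * r₂ ^ ((q:ℝ)/b) *
      ∫ x in Set.Ioc (rhoFun q p r₁ (lam * r₂)) r₁,
        x ^ (-(a:ℝ)/b) * Real.exp (1 / (b * x ^ p))

theorem L_M_limits
    (a b q : ℕ) (hab : a < b) (hb : 2 ≤ b) (hq1 : 1 ≤ q) (hqb : q ≤ b)
    (p : ℝ) (hp0 : 0 < p) (hp : p < 1 - (a:ℝ)/b)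
    (r₁ r₂ : ℝ) (hr₁ : r₁ ∈ Set.Ioo (0:ℝ) 1) (hr₂ : r₂ ∈ Set.Ioo (0:ℝ) 1) :
    Tendsto (fun lam => Lconst a b q p r₁ r₂ lam) (nhdsWithin 0 (Set.Ioi 0)) (nhds 0) ∧
    Tendsto (fun lam => Mconst a b q p r₁ r₂ lam) (nhdsWithin 0 (Set.Ioi 0)) atTop ∧
    Tendsto (fun lam => Lconst a b q p r₁ r₂ lam) atTop atTop ∧
    Tendsto (fun lam => Mconst a b q p r₁ r₂ lam) atTop (nhds 0) := by
  obtain ⟨hr₁0, hr₁1⟩ := hr₁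
  obtain ⟨hr₂0, hr₂1⟩ := hr₂
  have hb0 : (0:ℝ) < b := by
    have : (0:ℕ) < b := lt_of_lt_of_le (by norm_num) hb
    exact_mod_cast this
  have hq0 : (0:ℝ) < q := by exact_mod_cast hq1
  have hab' : (a:ℝ)/b < 1 := by
    rw [div_lt_one hb0]; exact_mod_cast hab
  have hα0 : 0 < 1 - (a:ℝ)/b := by linarith
  have hαp : 0 < 1 - (a:ℝ)/b - p := by linarith
  have hba : (0:ℝ) < (b:ℝ) - a := by
    have : (a:ℝ) < b := by exact_mod_cast hab
    linarith
  set T := Real.exp (-1 / (q * r₁ ^ p)) with hT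
  have hT0 : 0 < T := Real.exp_pos _
  -- behaviour of rhoFun on (0, T)
  have hprop : ∀ lam : ℝ, 0 < lam → lam * r₂ < T →
      0 < rhoFun q p r₁ (lam * r₂) ∧
      (rhoFun q p r₁ (lam * r₂)) ^ p = -1 / (q * Real.log (lam * r₂)) ∧
      Real.log (lam * r₂) < 0 := by
    intro lam hlam hlt
    have hy0 : 0 < lam * r₂ := mul_pos hlam hr₂0
    have hT1 : T < 1 := by
      rw [hT, Real.exp_lt_one_iff]
      have h1 : (0:ℝ) < q * r₁ ^ p := by positivity
      rw [neg_div]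
      simp only [Left.neg_neg_iff]
      positivity
    have hy1 : lam * r₂ < 1 := lt_trans hlt hT1
    have hlog : Real.log (lam * r₂) < 0 := Real.log_neg hy0 hy1
    have hXpos : 0 < -1 / (q * Real.log (lam * r₂)) := by
      have : q * Real.log (lam * r₂) < 0 := mul_neg_of_pos_of_neg hq0 hlog
      rw [neg_div]
      exact neg_pos.mpr (div_neg_of_pos_of_neg one_pos this)
    have heq : rhoFun q p r₁ (lam * r₂) = (-1 / (q * Real.log (lam * r₂))) ^ (1/p) := by
      rw [rhoFun, if_pos hlt]
    refine ⟨?_, ?_, hlog⟩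
    · rw [heq]; exact Real.rpow_pos_of_pos hXpos _
    · rw [heq, ← Real.rpow_mul hXpos.le, one_div_mul_cancel (ne_of_gt hp0), Real.rpow_one]
  -- the set where lam is small
  have hmem0 : {lam : ℝ | 0 < lam ∧ lam * r₂ < T} ∈ 𝓝[>] (0:ℝ) := by
    filter_upwards [Ioo_mem_nhdsGT_of_mem
      (show (0:ℝ) ∈ Set.Ico 0 (T / r₂) from ⟨le_refl _, by positivity⟩)] with lam hlam
    exact ⟨hlam.1, (lt_div_iff₀ hr₂0).mp hlam.2⟩
  -- tendsto of rho composed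
  have hg : Tendsto (fun lam => rhoFun q p r₁ (lam * r₂)) (𝓝[>] (0:ℝ)) (𝓝[>] (0:ℝ)) := by
    apply (tendsto_rho q hq1 p r₁ hp0 hr₁0).comp
    rw [tendsto_nhdsWithin_iff]
    constructor
    · have h1 : Tendsto (fun lam : ℝ => lam * r₂) (𝓝 0) (𝓝 0) := by
        simpa using (continuous_mul_const r₂).tendsto (0:ℝ)
      exact h1.mono_left nhdsWithin_le_nhds
    · filter_upwards [self_mem_nhdsWithin] with lam hlam using mul_pos hlam hr₂0
  -- L tends to 0 as lam → 0⁺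
  have hL0 : Tendsto (fun lam => Lconst a b q p r₁ r₂ lam) (𝓝[>] (0:ℝ)) (𝓝 0) := by
    set K : ℝ := 1 / (q * (1 - (a:ℝ)/b - p)) - 1 / (q * (1 - (a:ℝ)/b)) with hK
    have h1 : Tendsto (fun lam => K * (rhoFun q p r₁ (lam * r₂)) ^ (1 - (a:ℝ)/b - p))
        (𝓝[>] (0:ℝ)) (𝓝 0) := by
      have hc : ContinuousAt (fun x : ℝ => x ^ (1 - (a:ℝ)/b - p)) 0 :=
        Real.continuousAt_rpow_const 0 _ (Or.inr hαp.le)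
      have h2 := hc.tendsto.comp (hg.mono_right nhdsWithin_le_nhds)
      rw [Real.zero_rpow (ne_of_gt hαp)] at h2
      simpa using h2.const_mul K
    apply h1.congr'
    filter_upwards [hmem0] with lam hlam
    obtain ⟨hpos, hgp, hlog⟩ := hprop lam hlam.1 hlam.2
    simp only [Lconst]
    have hsplit : (rhoFun q p r₁ (lam * r₂)) ^ (1 - (a:ℝ)/b)
        = (rhoFun q p r₁ (lam * r₂)) ^ (1 - (a:ℝ)/b - p) * (rhoFun q p r₁ (lam * r₂)) ^ p := by
      rw [← Real.rpow_add hpos]; ring_nf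
    rw [hsplit, hgp, hK]
    have hlog0 : Real.log (lam * r₂) ≠ 0 := ne_of_lt hlog
    have h1' : (1:ℝ) - (a:ℝ)/b ≠ 0 := ne_of_gt hα0
    have h2' : (1:ℝ) - (a:ℝ)/b - p ≠ 0 := ne_of_gt hαp
    have hq' : (q:ℝ) ≠ 0 := ne_of_gt hq0
    field_simp
    ring
  -- M tends to atTop as lam → 0⁺
  have hM0 : Tendsto (fun lam => Mconst a b q p r₁ r₂ lam) (𝓝[>] (0:ℝ)) atTop := by
    have hF := tendsto_intF a b p hp0 (lt_of_lt_of_le (by norm_num) hb) hr₁0 hr₁1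
    have hc : (0:ℝ) < (b:ℝ)/q * r₂ ^ ((q:ℝ)/b) := by positivity
    have hcomp : Tendsto (fun lam => ((b:ℝ)/q) * r₂ ^ ((q:ℝ)/b) *
        ∫ x in Set.Ioc (rhoFun q p r₁ (lam * r₂)) r₁,
          x ^ (-(a:ℝ)/b) * Real.exp (1 / (b * x ^ p))) (𝓝[>] (0:ℝ)) atTop :=
      Tendsto.const_mul_atTop hc (hF.comp hg)
    apply tendsto_atTop_mono' _ ?_ hcomp
    filter_upwards [hmem0] with lam hlam
    obtain ⟨hpos, hgp, hlog⟩ := hprop lam hlam.1 hlam.2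
    simp only [Mconst]
    have ht1 : 0 ≤ ((b:ℝ)^2 / (q * ((b:ℝ) - a))) * lam ^ (-(q:ℝ)/b) *
        (rhoFun q p r₁ (lam * r₂)) ^ (1 - (a:ℝ)/b) := by
      apply mul_nonneg (mul_nonneg ?_ ?_) (Real.rpow_nonneg hpos.le _)
      · positivity
      · exact Real.rpow_nonneg hlam.1.le _
    linarith
  -- eventual equality for lam → ∞
  have hEv : ∀ᶠ lam : ℝ in atTop, rhoFun q p r₁ (lam * r₂) = r₁ := by
    filter_upwards [eventually_ge_atTop (T / r₂)] with lam hlam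
    exact if_neg (not_lt.mpr ((div_le_iff₀ hr₂0).mp hlam))
  -- L tends to atTop as lam → ∞
  have hL1 : Tendsto (fun lam => Lconst a b q p r₁ r₂ lam) atTop atTop := by
    have hlogT : Tendsto (fun lam : ℝ => Real.log (lam * r₂)) atTop atTop :=
      Real.tendsto_log_atTop.comp (Tendsto.atTop_mul_const hr₂0 tendsto_id)
    have h1 : Tendsto (fun lam : ℝ =>
        r₁ ^ (1 - (a:ℝ)/b) / (1 - (a:ℝ)/b) * Real.log (lam * r₂)
          + r₁ ^ (1 - (a:ℝ)/b - p) / (q * (1 - (a:ℝ)/b - p))) atTop atTop := by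
      apply tendsto_atTop_add_const_right
      exact Tendsto.const_mul_atTop (by positivity) hlogT
    apply h1.congr'
    filter_upwards [hEv] with lam h
    simp only [Lconst, h]
  -- M tends to 0 as lam → ∞
  have hM1 : Tendsto (fun lam => Mconst a b q p r₁ r₂ lam) atTop (𝓝 0) := by
    have h2 : Tendsto (fun lam : ℝ => lam ^ (-((q:ℝ)/b))) atTop (𝓝 0) :=
      tendsto_rpow_neg_atTop (by positivity)
    have h1 : Tendsto (fun lam : ℝ =>
        ((b:ℝ)^2 / (q * ((b:ℝ) - a))) * lam ^ (-(q:ℝ)/b) * r₁ ^ (1 - (a:ℝ)/b)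
          + ((b:ℝ)/q) * r₂ ^ ((q:ℝ)/b) * 0) atTop (𝓝 0) := by
      have h3 := (h2.const_mul ((b:ℝ)^2 / (q * ((b:ℝ) - a)))).mul_const (r₁ ^ (1 - (a:ℝ)/b))
      simp only [mul_zero, add_zero]
      have h4 : (fun lam : ℝ => ((b:ℝ)^2 / (q * ((b:ℝ) - a))) * lam ^ (-(q:ℝ)/b)
          * r₁ ^ (1 - (a:ℝ)/b)) = fun lam : ℝ => ((b:ℝ)^2 / (q * ((b:ℝ) - a)))
          * lam ^ (-((q:ℝ)/b)) * r₁ ^ (1 - (a:ℝ)/b) := by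
        funext lam; rw [neg_div]
      rw [h4]
      simpa using h3
    apply h1.congr'
    filter_upwards [hEv] with lam h
    simp only [Mconst, h, Set.Ioc_self, MeasureTheory.Measure.restrict_empty,
      MeasureTheory.integral_zero_measure]
  exact ⟨hL0, hM0, hL1, hM1⟩
end
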